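/- Let D be a minimal counterexample, C its Hamilton cycle with the stated domination property, and x a vertex of D incident with no green edges such that the edge between x^- and x is red (directed from x^- to x). Then for every pair of vertices m ∈ B_b^+(x) and n ∈ R_r^-(x) with m ≠ n^+, the directed subpath mCn of C contains a vertex p ∈ R_r^+(x) such that the subpath mCp contains no vertex of B^-(x). -/

import Mathlib

/-- A 3-coloured tournament on vertex type `V`: between any two distinct
vertices there is exactly one directed edge (`beats`), and `colour x y` gives
the colour (one of three: red, blue, green) of the edge from `x` to `y`
(meaningful when `beats x y` holds). -/
structure CTournament (V : Type*) where
  beats : V → V → Prop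
  irrefl : ∀ v, ¬ beats v v
  asymm : ∀ v w, beats v w → ¬ beats w v
  total : ∀ v w, v ≠ w → beats v w ∨ beats w v
  colour : V → V → Fin 3

namespace CTournament

/-- The colour red. -/
def red : Fin 3 := 0
/-- The colour blue. -/
def blue : Fin 3 := 1
/-- The colour green. -/
def green : Fin 3 := 2

variable {V : Type*} (T : CTournament V)

/-- `x` monochromatically dominates `y` in colour `c`: there is a directed
path (with at least one edge) from `x` to `y` all of whose edges have
colour `c`. -/
def Dom (c : Fin 3) (x y : V) : Prop :=
  Relation.TransGen (fun a b => T.beats a b ∧ T.colour a b = c) x y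

/-- `x` monochromatically dominates `y` (in some colour). -/
def MDom (x y : V) : Prop := ∃ c, T.Dom c x y

/-- `x` monochromatically dominates `y` in colour `c` within the
subtournament induced on the vertex set `S`. -/
def DomIn (S : Set V) (c : Fin 3) (x y : V) : Prop :=
  Relation.TransGen (fun a b => a ∈ S ∧ b ∈ S ∧ T.beats a b ∧ T.colour a b = c) x y

/-- `x` monochromatically dominates `y` within the subtournament induced on `S`. -/
def MDomIn (S : Set V) (x y : V) : Prop := ∃ c, T.DomIn S c x y

/-- `T` contains a `T_3`: three vertices spanning a cyclic triangle whose
three edges have three pairwise distinct colours. -/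
def HasT3 : Prop :=
  ∃ a b c : V, T.beats a b ∧ T.beats b c ∧ T.beats c a ∧
    T.colour a b ≠ T.colour b c ∧ T.colour b c ≠ T.colour c a ∧
    T.colour a b ≠ T.colour c a

/-- Vertex `v` is incident with an edge of colour `c`. -/
def IncidentColour (v : V) (c : Fin 3) : Prop :=
  ∃ w, (T.beats v w ∧ T.colour v w = c) ∨ (T.beats w v ∧ T.colour w v = c)

/-- `T` is a minimal counterexample: it contains no `T_3`, no vertex
monochromatically dominates every other vertex, and every proper nonempty
subset of the vertices spans a subtournament containing a vertex that
monochromatically dominates (within that subtournament) every other vertex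
of the subset. -/
def MinimalCex : Prop :=
  ¬ T.HasT3 ∧
  (¬ ∃ x : V, ∀ y, y ≠ x → T.MDom x y) ∧
  ∀ S : Set V, S.Nonempty → S ≠ Set.univ →
    ∃ x ∈ S, ∀ y ∈ S, y ≠ x → T.MDomIn S x y

/-- The permutation `σ` (sending every vertex to its successor) is a directed
Hamilton cycle of `T`: every vertex beats its successor, and all vertices lie
on a single cycle of `σ`. -/
def IsHamCycle (σ : Equiv.Perm V) : Prop :=
  (∀ v, T.beats v (σ v)) ∧ ∀ v w : V, ∃ n : ℕ, (⇑σ)^[n] v = w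

/-- The domination property of the Hamilton cycle `σ`: every vertex
monochromatically dominates every vertex other than itself and its
predecessor on the cycle, and no vertex monochromatically dominates its
predecessor. -/
def HamDomProp (σ : Equiv.Perm V) : Prop :=
  (∀ x y : V, y ≠ x → y ≠ σ.symm x → T.MDom x y) ∧
  ∀ x : V, ¬ T.MDom x (σ.symm x)

/-- The vertex set of the directed subpath `xCy` of the Hamilton cycle whose
successor permutation is `σ`: all vertices reachable from `x` along the cycle
no later than the first visit of `y`. -/
def PathSet (σ : Equiv.Perm V) (x y : V) : Set V :=
  {z | ∃ k : ℕ, (⇑σ)^[k] x = z ∧ ∀ j < k, (⇑σ)^[j] x ≠ y}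

/-- `R^+(x)`: the vertices to which `x` sends a red edge. -/
def Rplus (x : V) : Set V := {v | T.beats x v ∧ T.colour x v = red}
/-- `R^-(x)`: the vertices from which `x` receives a red edge. -/
def Rminus (x : V) : Set V := {v | T.beats v x ∧ T.colour v x = red}
/-- `B^+(x)`: the vertices to which `x` sends a blue edge. -/
def Bplus (x : V) : Set V := {v | T.beats x v ∧ T.colour x v = blue}
/-- `B^-(x)`: the vertices from which `x` receives a blue edge. -/
def Bminus (x : V) : Set V := {v | T.beats v x ∧ T.colour v x = blue}
/-- `R_r^+(x) = {v ∈ R^+(x) : v monochromatically dominates x in red}`. -/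
def Rrplus (x : V) : Set V := {v ∈ T.Rplus x | T.Dom red v x}
/-- `R_r^-(x) = {v ∈ R^-(x) : x monochromatically dominates v in red}`. -/
def Rrminus (x : V) : Set V := {v ∈ T.Rminus x | T.Dom red x v}
/-- `B_b^+(x) = {v ∈ B^+(x) : v monochromatically dominates x in blue}`. -/
def Bbplus (x : V) : Set V := {v ∈ T.Bplus x | T.Dom blue v x}
/-- `B_b^-(x) = {v ∈ B^-(x) : x monochromatically dominates v in blue}`. -/
def Bbminus (x : V) : Set V := {v ∈ T.Bminus x | T.Dom blue x v}

end CTournament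
section Helpers

namespace CTournament

variable {V : Type*} (T : CTournament V)

private lemma fin3_cases (c : Fin 3) : c = red ∨ c = blue ∨ c = green := by
  revert c; decide

private lemma dom_single {c : Fin 3} {a b : V} (h1 : T.beats a b) (h2 : T.colour a b = c) :
    T.Dom c a b :=
  Relation.TransGen.single ⟨h1, h2⟩

private lemma dom_trans {c : Fin 3} {a b d : V} (h1 : T.Dom c a b) (h2 : T.Dom c b d) :
    T.Dom c a d :=
  Relation.TransGen.trans h1 h2

private lemma dom_tail {c : Fin 3} {a b d : V} (h1 : T.Dom c a b) (hb : T.beats b d)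
    (hc : T.colour b d = c) : T.Dom c a d :=
  Relation.TransGen.tail h1 ⟨hb, hc⟩

private lemma dom_head_edge {c : Fin 3} {a b : V} (h : T.Dom c a b) :
    ∃ w, T.beats a w ∧ T.colour a w = c := by
  have h' : Relation.TransGen (fun a b => T.beats a b ∧ T.colour a b = c) a b := h
  obtain ⟨w, hw, -⟩ := Relation.TransGen.head'_iff.mp h'
  exact ⟨w, hw⟩

private lemma dom_last_edge {c : Fin 3} {a b : V} (h : T.Dom c a b) :
    ∃ w, T.beats w b ∧ T.colour w b = c := by
  have h' : Relation.TransGen (fun a b => T.beats a b ∧ T.colour a b = c) a b := h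
  cases h' with
  | single h'' => exact ⟨a, h''⟩
  | tail _ h'' => exact ⟨_, h''⟩

private lemma domIn_last_edge {S : Set V} {c : Fin 3} {a b : V} (h : T.DomIn S c a b) :
    ∃ w, w ∈ S ∧ T.beats w b ∧ T.colour w b = c := by
  have h' : Relation.TransGen
      (fun a b => a ∈ S ∧ b ∈ S ∧ T.beats a b ∧ T.colour a b = c) a b := h
  cases h' with
  | single h'' => exact ⟨a, h''.1, h''.2.2.1, h''.2.2.2⟩
  | tail _ h'' => exact ⟨_, h''.1, h''.2.2.1, h''.2.2.2⟩

private lemma domIn_dom {S : Set V} {c : Fin 3} {a b : V} (h : T.DomIn S c a b) :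
    T.Dom c a b :=
  Relation.TransGen.mono (p := fun a b => T.beats a b ∧ T.colour a b = c)
    (fun _ _ hxy => ⟨hxy.2.2.1, hxy.2.2.2⟩) _ _ h

end CTournament

end Helpers

open CTournament

/-- In a minimal counterexample with Hamilton cycle `σ`, if `x`
is incident with no green edge and the edge from `x⁻` to `x` is red, then for all
`m ∈ B_b⁺(x)` and `n ∈ R_r⁻(x)` with `m ≠ n⁺`, the subpath `mCn` contains a vertex
`p ∈ R_r⁺(x)` such that `mCp` contains no vertex of `B⁻(x)`. -/
theorem subpath_contains_Rrplus_vertex {V : Type*} [Fintype V] (T : CTournament V)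
    (h : T.MinimalCex) (σ : Equiv.Perm V)
    (hσ : T.IsHamCycle σ) (hprop : T.HamDomProp σ)
    (x : V) (hx : ¬ T.IncidentColour x CTournament.green)
    (hpred : T.beats (σ.symm x) x)
    (hpredred : T.colour (σ.symm x) x = CTournament.red) :
    ∀ m ∈ T.Bbplus x, ∀ n ∈ T.Rrminus x, m ≠ σ n →
      ∃ p ∈ T.Rrplus x, p ∈ CTournament.PathSet σ m n ∧
        ∀ z ∈ CTournament.PathSet σ m p, z ∉ T.Bminus x := by
  classical
  intro m hm n hn hmn
  obtain ⟨hHC, hreach⟩ := hσ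
  obtain ⟨hdom, hmdompred⟩ := hprop
  obtain ⟨-, -, hmin⟩ := h
  obtain ⟨hm1, hmbx⟩ := hm
  obtain ⟨hbxm, hcxm⟩ := hm1
  obtain ⟨hn1, hxrn⟩ := hn
  obtain ⟨hbnx, hcnx⟩ := hn1
  -- no green edges at x
  have hng1 : ∀ w, T.beats x w → T.colour x w ≠ green :=
    fun w hb hc => hx ⟨w, Or.inl ⟨hb, hc⟩⟩
  have hng2 : ∀ w, T.beats w x → T.colour w x ≠ green :=
    fun w hb hc => hx ⟨w, Or.inr ⟨hb, hc⟩⟩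
  have hfromx : ∀ (c : Fin 3) (v : V), T.Dom c x v → c = red ∨ c = blue := by
    intro c v hd
    obtain ⟨w, hw, hcw⟩ := T.dom_head_edge hd
    rcases fin3_cases c with h1 | h1 | h1
    · exact Or.inl h1
    · exact Or.inr h1
    · exact absurd (hcw.trans h1) (hng1 w hw)
  have htox : ∀ (c : Fin 3) (v : V), T.Dom c v x → c = red ∨ c = blue := by
    intro c v hd
    obtain ⟨w, hw, hcw⟩ := T.dom_last_edge hd
    rcases fin3_cases c with h1 | h1 | h1
    · exact Or.inl h1
    · exact Or.inr h1
    · exact absurd (hcw.trans h1) (hng2 w hw)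
  -- basic distinctness
  have hmnex : m ≠ x := fun e => T.irrefl x (e ▸ hbxm)
  have hnnex : n ≠ x := fun e => T.irrefl x (e ▸ hbnx)
  have hsymm : ∀ i : ℕ, σ.symm ((⇑σ)^[i + 1] m) = (⇑σ)^[i] m := fun i => by
    rw [Function.iterate_succ_apply', Equiv.symm_apply_apply]
  have hm_ne_sx : σ.symm m ≠ x := by
    intro e
    exact hmdompred m ⟨blue, by rw [e]; exact hmbx⟩
  have hn_symmx : n ≠ σ.symm x := by
    intro e
    exact hmdompred x ⟨red, by rw [← e]; exact hxrn⟩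
  -- ¬ m ⇒_red x
  have hmr : ¬ T.Dom red m x := by
    have hpredm_ne : σ.symm m ≠ σ.symm x := fun e => hmnex (σ.symm.injective e)
    obtain ⟨c0, hc0⟩ := hdom x (σ.symm m) hm_ne_sx hpredm_ne
    have hxr_predm : T.Dom red x (σ.symm m) := by
      rcases hfromx c0 _ hc0 with rfl | rfl
      · exact hc0
      · exact absurd (⟨blue, T.dom_trans hmbx hc0⟩ : T.MDom m (σ.symm m)) (hmdompred m)
    exact fun hd => hmdompred m ⟨red, T.dom_trans hd hxr_predm⟩
  -- ¬ x ⇒_blue n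
  have hnb : ¬ T.Dom blue x n := by
    have hsn_ne_x : σ n ≠ x := fun e => hn_symmx (by rw [← e, Equiv.symm_apply_apply])
    have hsnnopred : ¬ T.MDom (σ n) n := by
      have := hmdompred (σ n)
      rwa [Equiv.symm_apply_apply] at this
    obtain ⟨c1, hc1⟩ := hdom (σ n) x (Ne.symm hsn_ne_x)
      (by rw [Equiv.symm_apply_apply]; exact Ne.symm hnnex)
    have hsn_blue : T.Dom blue (σ n) x := by
      rcases htox c1 _ hc1 with rfl | rfl
      · exact absurd ⟨red, T.dom_trans hc1 hxrn⟩ hsnnopred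
      · exact hc1
    exact fun hd => hsnnopred ⟨blue, T.dom_trans hsn_blue hd⟩
  -- index of n on the cycle
  have hexK : ∃ k, (⇑σ)^[k] m = n := hreach m n
  obtain ⟨K, hK, hKmin⟩ : ∃ K, (⇑σ)^[K] m = n ∧ ∀ j < K, (⇑σ)^[j] m ≠ n :=
    ⟨Nat.find hexK, Nat.find_spec hexK, fun j hj => Nat.find_min hexK hj⟩
  have hQex : ∃ k, ¬ T.Dom blue x ((⇑σ)^[k] m) := ⟨K, by rw [hK]; exact hnb⟩
  obtain ⟨k1, hQ, hk1K, hblue⟩ :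
      ∃ k, (¬ T.Dom blue x ((⇑σ)^[k] m)) ∧ k ≤ K ∧ ∀ j < k, T.Dom blue x ((⇑σ)^[j] m) :=
    ⟨Nat.find hQex, Nat.find_spec hQex, Nat.find_min' hQex (by rw [hK]; exact hnb),
      fun j hj => not_not.mp (Nat.find_min hQex hj)⟩
  have hk1pos : k1 ≠ 0 := by
    intro e
    rw [e, Function.iterate_zero_apply] at hQ
    exact hQ (T.dom_single hbxm hcxm)
  obtain ⟨k0, rfl⟩ : ∃ k0, k1 = k0 + 1 := ⟨k1 - 1, (Nat.succ_pred_eq_of_pos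
    (Nat.pos_of_ne_zero hk1pos)).symm⟩
  -- iterates up to k0+1 are not x
  have hxnot : ∀ j ≤ k0 + 1, (⇑σ)^[j] m ≠ x := by
    intro j hj
    cases j with
    | zero => simpa using hmnex
    | succ i =>
      intro e
      have hi : i < k0 + 1 := by omega
      have h2 : σ.symm x = (⇑σ)^[i] m := by rw [← e, hsymm i]
      exact hmdompred x ⟨blue, by rw [h2]; exact hblue i hi⟩
  -- iterates up to k0+1 are not in B⁻(x)
  have hnoB : ∀ j ≤ k0 + 1, (⇑σ)^[j] m ∉ T.Bminus x := by
    intro j hj hzB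
    cases j with
    | zero =>
      obtain ⟨hb, -⟩ := hzB
      rw [Function.iterate_zero_apply] at hb
      exact T.asymm x m hbxm hb
    | succ i =>
      obtain ⟨hb, hc⟩ := hzB
      have hi : i < k0 + 1 := by omega
      have hd : T.Dom blue ((⇑σ)^[i + 1] m) ((⇑σ)^[i] m) :=
        T.dom_trans (T.dom_single hb hc) (hblue i hi)
      exact hmdompred ((⇑σ)^[i + 1] m) ⟨blue, by rw [hsymm i]; exact hd⟩
  have hv_ne_x : (⇑σ)^[k0 + 1] m ≠ x := hxnot (k0 + 1) le_rfl
  rcases T.total x ((⇑σ)^[k0 + 1] m) (Ne.symm hv_ne_x) with hA | hB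
  · -- CASE A : x beats v; then v ∈ R_r⁺(x) is the required p
    have hcol : T.colour x ((⇑σ)^[k0 + 1] m) = red := by
      rcases fin3_cases (T.colour x ((⇑σ)^[k0 + 1] m)) with h1 | h1 | h1
      · exact h1
      · exact absurd (T.dom_single hA h1) hQ
      · exact absurd h1 (hng1 _ hA)
    have hvnopred : ¬ T.MDom ((⇑σ)^[k0 + 1] m) ((⇑σ)^[k0] m) := by
      have := hmdompred ((⇑σ)^[k0 + 1] m)
      rwa [hsymm k0] at this
    have hvdomx : T.Dom red ((⇑σ)^[k0 + 1] m) x := by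
      obtain ⟨c, hc⟩ := hdom ((⇑σ)^[k0 + 1] m) x (Ne.symm hv_ne_x)
        (by rw [hsymm k0]; exact Ne.symm (hxnot k0 (by omega)))
      rcases htox c _ hc with rfl | rfl
      · exact hc
      · exact absurd ⟨blue, T.dom_trans hc (hblue k0 (by omega))⟩ hvnopred
    refine ⟨(⇑σ)^[k0 + 1] m, ⟨⟨hA, hcol⟩, hvdomx⟩,
      ⟨k0 + 1, rfl, fun j hj => hKmin j (lt_of_lt_of_le hj hk1K)⟩, ?_⟩
    rintro z ⟨i, rfl, hzi⟩ hzB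
    have hik : i ≤ k0 + 1 := by
      by_contra hgt
      exact hzi (k0 + 1) (by omega) rfl
    exact hnoB i hik hzB
  · -- CASE B : v beats x
    have hcolB : T.colour ((⇑σ)^[k0 + 1] m) x = red := by
      rcases fin3_cases (T.colour ((⇑σ)^[k0 + 1] m) x) with h1 | h1 | h1
      · exact h1
      · exact absurd (⟨hB, h1⟩ : (⇑σ)^[k0 + 1] m ∈ T.Bminus x) (hnoB (k0 + 1) le_rfl)
      · exact absurd h1 (hng2 _ hB)
    -- the set S = {m, σ m, …, σ^[k0+1] m} ∪ {x}
    set S : Set V := insert x {z | ∃ j ≤ k0 + 1, (⇑σ)^[j] m = z} with hS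
    have hmemS : ∀ j ≤ k0 + 1, (⇑σ)^[j] m ∈ S := fun j hj => by
      rw [hS]; exact Set.mem_insert_iff.mpr (Or.inr ⟨j, hj, rfl⟩)
    have hxS : x ∈ S := by rw [hS]; exact Set.mem_insert _ _
    have hSne : S ≠ Set.univ := by
      have hw : ∃ w, w ∉ S := by
        by_cases hcase : (⇑σ)^[k0 + 1] m = σ.symm x
        · refine ⟨σ x, fun hmem => ?_⟩
          rw [hS, Set.mem_insert_iff] at hmem
          rcases hmem with h1 | ⟨j, hj, hjx⟩
          · have hb := hHC x
            rw [h1] at hb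
            exact T.irrefl x hb
          · cases j with
            | zero =>
              rw [Function.iterate_zero_apply] at hjx
              have h2 : σ.symm m = x := by rw [hjx, Equiv.symm_apply_apply]
              exact hmdompred m ⟨blue, by rw [h2]; exact hmbx⟩
            | succ i =>
              have h2 := congrArg σ.symm hjx
              rw [hsymm i, Equiv.symm_apply_apply] at h2
              exact hxnot i (by omega) h2
        · refine ⟨σ ((⇑σ)^[k0 + 1] m), fun hmem => ?_⟩
          rw [hS, Set.mem_insert_iff] at hmem
          rcases hmem with h1 | ⟨j, hj, hjx⟩
          · exact hcase (by rw [← h1, Equiv.symm_apply_apply])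
          · have hj2 : (⇑σ)^[k0 + 2] m = (⇑σ)^[j] m := by
              rw [Function.iterate_succ_apply']; exact hjx.symm
            have hcan : (⇑σ)^[k0 + 2 - j] m = m := by
              refine σ.injective.iterate j ?_
              rw [← Function.iterate_add_apply,
                Nat.add_sub_cancel' (show j ≤ k0 + 2 by omega)]
              exact hj2
            by_cases hdK : k0 + 2 - j ≤ K
            · have hKsplit : (⇑σ)^[K] m = (⇑σ)^[K - (k0 + 2 - j)] m := by
                conv_lhs => rw [show K = (K - (k0 + 2 - j)) + (k0 + 2 - j) by omega]
                rw [Function.iterate_add_apply, hcan]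
              exact hKmin (K - (k0 + 2 - j)) (by omega) (hKsplit.symm.trans hK)
            · have hj0 : j = 0 ∧ k0 + 1 = K := by omega
              obtain ⟨hj0, hkK⟩ := hj0
              apply hmn
              rw [hj0, Function.iterate_zero_apply] at hj2
              rw [← hK, ← hkK, ← Function.iterate_succ_apply' (⇑σ) (k0 + 1) m]
              exact hj2.symm
      obtain ⟨w, hw⟩ := hw
      intro hU
      exact hw (by rw [hU]; trivial)
    obtain ⟨y, hyS, hy⟩ := hmin S ⟨x, hxS⟩ hSne
    rw [hS, Set.mem_insert_iff] at hyS
    rcases hyS with hyx | ⟨j, hj, hjy⟩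
    · -- the king of S is x : extract the required p from a red path from x to v
      rw [hyx] at hy
      have hvS : (⇑σ)^[k0 + 1] m ∈ S := hmemS (k0 + 1) le_rfl
      obtain ⟨c, hc⟩ := hy _ hvS (hxnot (k0 + 1) le_rfl)
      have hc' : Relation.TransGen
          (fun a b => a ∈ S ∧ b ∈ S ∧ T.beats a b ∧ T.colour a b = c) x
          ((⇑σ)^[k0 + 1] m) := hc
      obtain ⟨w, hw, hrest⟩ := Relation.TransGen.head'_iff.mp hc'
      obtain ⟨-, hwS, hbxw, hcxw⟩ := hw
      have hcred : c = red := by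
        rcases fin3_cases c with h1 | h1 | h1
        · exact h1
        · subst h1; exact absurd (T.domIn_dom hc) hQ
        · subst h1; exact absurd hcxw (hng1 w hbxw)
      subst hcred
      rcases Relation.reflTransGen_iff_eq_or_transGen.mp hrest with heq | htg
      · rw [← heq] at hbxw
        exact absurd hbxw (T.asymm _ _ hB)
      · have hwdomx : T.Dom red w x :=
          T.dom_tail (T.domIn_dom htg) hB hcolB
        have hwne : w ≠ x := fun e => T.irrefl x (e ▸ hbxw)
        rw [hS, Set.mem_insert_iff] at hwS
        rcases hwS with h1 | ⟨i, hi, hiw⟩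
        · exact absurd h1 hwne
        · have hiv : i ≠ k0 + 1 := by
            intro e
            rw [e] at hiw
            rw [← hiw] at hbxw
            exact T.asymm _ _ hB hbxw
          have hilt : i < k0 + 1 := lt_of_le_of_ne hi hiv
          refine ⟨w, ⟨⟨hbxw, hcxw⟩, hwdomx⟩,
            ⟨i, hiw, fun l hl => hKmin l ((hl.trans hilt).trans_le hk1K)⟩, ?_⟩
          rintro z ⟨i2, rfl, hzi⟩ hzB
          have hik : i2 ≤ i := by
            by_contra hgt
            exact hzi i (by omega) hiw
          exact hnoB i2 (by omega) hzB
    · -- the king of S is on the path : contradiction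
      rw [← hjy] at hy
      cases j with
      | zero =>
        obtain ⟨c, hc⟩ := hy x hxS (Ne.symm (hxnot 0 (by omega)))
        obtain ⟨w, hwS, hbwx, hcwx⟩ := T.domIn_last_edge hc
        have hwne : w ≠ x := fun e => T.irrefl x (e ▸ hbwx)
        rw [hS, Set.mem_insert_iff] at hwS
        rcases hwS with h1 | ⟨i, hi, hiw⟩
        · exact absurd h1 hwne
        · have hcred : c = red := by
            rcases fin3_cases c with h1 | h1 | h1
            · exact h1
            · exact absurd (show (⇑σ)^[i] m ∈ T.Bminus x by
                rw [hiw]; exact ⟨hbwx, h1 ▸ hcwx⟩) (hnoB i hi)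
            · exact absurd (h1 ▸ hcwx) (hng2 w hbwx)
          subst hcred
          have := T.domIn_dom hc
          rw [Function.iterate_zero_apply] at this
          exact absurd this hmr
      | succ i =>
        have hyi : (⇑σ)^[i] m ∈ S := hmemS i (by omega)
        have hne : (⇑σ)^[i] m ≠ (⇑σ)^[i + 1] m := by
          intro e
          have hb := hHC ((⇑σ)^[i] m)
          rw [← Function.iterate_succ_apply' (⇑σ) i m, ← e] at hb
          exact T.irrefl _ hb
        obtain ⟨c, hc⟩ := hy _ hyi hne
        refine absurd (⟨c, ?_⟩ : T.MDom ((⇑σ)^[i + 1] m) (σ.symm ((⇑σ)^[i + 1] m)))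
          (hmdompred ((⇑σ)^[i + 1] m))
        rw [hsymm i]
        exact T.domIn_dom hc
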